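/- With s₁ = (−quv+pu+pv+q)(puv+qu+qv−p)/q², s₂ = (u²+1)(qv−p)(pv+q)/q², s₃ = mn(u²+1)(v²+1)(p²+q²)/(q²(m²+n²)), d = (p²+q²)(v²+1)(mu−n)(nu+m)/((m²+n²)q²), and R = (u²+1)(v²+1)(p²+q²)/(4q²), where m,n,p,q,u,v are rationals with q ≠ 0 and m²+n² ≠ 0, the cyclic quadrilateral relation (s₁s₂+s₃d)(s₁s₃+s₂d)(s₁d+s₂s₃) = 16R²·(−s₁+s₂+s₃+d)(s₁−s₂+s₃+d)(s₁+s₂−s₃+d)(s₁+s₂+s₃−d)/16 holds, i.e., Paramesvara's circumradius condition for quadrilateral ABCD with sides s₁,s₂,s₃,d and circumradius R is satisfied. -/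
import Mathlib

set_option maxHeartbeats 1000000 in
private lemma key_quad (x1 y1 x2 y2 x3 y3 R a b c d : ℚ)
    (h1 : x1^2 + y1^2 = 1) (h2 : x2^2 + y2^2 = 1) (h3 : x3^2 + y3^2 = 1)
    (ha : a = 2*R*y1) (hb : b = 2*R*y2) (hc : c = 2*R*y3)
    (hd : d = -(2*R*((x1*x2 + y1*y2)*y3 + (y1*x2 - x1*y2)*x3))) :
    (a * b + c * d) * (a * c + b * d) * (a * d + b * c) =
      16 * R^2 * ((-a + b + c + d) * (a - b + c + d) *
        (a + b - c + d) * (a + b + c - d)) / 16 := by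
  subst ha hb hc hd
  linear_combination ((96)*y2^2*y3^2*R^6 + (-96)*y2^2*y3^4*R^6 + (-32)*y2^2*x3^2*y3^2*R^6 + (-96)*y2^4*y3^2*R^6 + (96)*y2^4*y3^4*R^6 + (-16)*y2^4*x3^2*R^6 + (48)*y2^4*x3^2*y3^2*R^6 + (-16)*x2^2*y3^4*R^6 + (-32)*x2^2*y2^2*y3^2*R^6 + (48)*x2^2*y2^2*y3^4*R^6 + (-96)*y1^2*y2^2*y3^2*R^6 + (96)*y1^2*y2^2*y3^4*R^6 + (-32)*y1^2*y2^2*x3^2*R^6 + (64)*y1^2*y2^2*x3^2*y3^2*R^6 + (96)*y1^2*y2^4*y3^2*R^6 + (-96)*y1^2*y2^4*y3^4*R^6 + (48)*y1^2*y2^4*x3^2*R^6 + (-80)*y1^2*y2^4*x3^2*y3^2*R^6 + (64)*y1^2*x2*y2*x3*y3*R^6 + (-64)*y1^2*x2*y2*x3*y3^3*R^6 + (-64)*y1^2*x2*y2^3*x3*y3*R^6 + (64)*y1^2*x2*y2^3*x3*y3^3*R^6 + (-32)*y1^2*x2^2*y3^2*R^6 + (48)*y1^2*x2^2*y3^4*R^6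 + (64)*y1^2*x2^2*y2^2*y3^2*R^6 + (-80)*y1^2*x2^2*y2^2*y3^4*R^6 + (96)*y1^2*x2^2*y2^2*x3^4*R^6 + (-192)*y1^2*x2^3*y2*x3^3*y3*R^6 + (96)*y1^2*x2^4*x3^2*y3^2*R^6 + (-64)*x1*y1*x2*y2^3*x3^4*R^6 + (192)*x1*y1*x2^2*y2^2*x3^3*y3*R^6 + (-192)*x1*y1*x2^3*y2*x3^2*y3^2*R^6 + (64)*x1*y1*x2^4*x3*y3^3*R^6 + (16)*x1^2*y2^4*x3^4*R^6 + (-64)*x1^2*x2*y2^3*x3^3*y3*R^6 + (96)*x1^2*x2^2*y2^2*x3^2*y3^2*R^6 + (-64)*x1^2*x2^3*y2*x3*y3^3*R^6 + (16)*x1^2*x2^4*y3^4*R^6) * h1 + ((-16)*y3^4*R^6 + (-32)*y2^2*y3^2*R^6 + (48)*y2^2*y3^4*R^6 + (64)*y1^2*y3^2*R^6 + (-32)*y1^2*y3^4*R^6 + (-32)*y1^2*x3^2*y3^2*R^6 + (-32)*y1^2*y2^2*y3^4*R^6 + (-32)*y1^2*y2^2*x3^2*R^6 + (64)*y1^2*y2^2*x3^2*y3^2*R^6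 + (96)*y1^2*y2^2*x3^4*R^6 + (-192)*y1^2*x2*y2*x3^3*y3*R^6 + (96)*y1^2*x2^2*x3^2*y3^2*R^6 + (-64)*y1^4*y3^2*R^6 + (48)*y1^4*y3^4*R^6 + (-16)*y1^4*x3^2*R^6 + (48)*y1^4*x3^2*y3^2*R^6 + (32)*y1^4*y2^2*y3^2*R^6 + (-16)*y1^4*y2^2*y3^4*R^6 + (48)*y1^4*y2^2*x3^2*R^6 + (-80)*y1^4*y2^2*x3^2*y3^2*R^6 + (-96)*y1^4*y2^2*x3^4*R^6 + (192)*y1^4*x2*y2*x3^3*y3*R^6 + (-96)*y1^4*x2^2*x3^2*y3^2*R^6 + (16)*y1^4*x2^2*x3^4*R^6 + (-64)*x1*y1*y2^2*x3*y3*R^6 + (64)*x1*y1*y2^2*x3*y3^3*R^6 + (192)*x1*y1*y2^2*x3^3*y3*R^6 + (-192)*x1*y1*x2*y2*x3^2*y3^2*R^6 + (64)*x1*y1*x2^2*x3*y3^3*R^6 + (64)*x1*y1^3*y2^2*x3*y3*R^6 + (-64)*x1*y1^3*y2^2*x3*y3^3*R^6 + (-192)*x1*y1^3*y2^2*x3^3*y3*R^6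 + (192)*x1*y1^3*x2*y2*x3^2*y3^2*R^6 + (-64)*x1*y1^3*x2*y2*x3^4*R^6 + (-64)*x1*y1^3*x2^2*x3*y3^3*R^6 + (64)*x1*y1^3*x2^2*x3^3*y3*R^6 + (96)*x1^2*y2^2*x3^2*y3^2*R^6 + (-64)*x1^2*x2*y2*x3*y3^3*R^6 + (16)*x1^2*x2^2*y3^4*R^6 + (-96)*x1^2*y1^2*y2^2*x3^2*y3^2*R^6 + (64)*x1^2*y1^2*x2*y2*x3*y3^3*R^6 + (-16)*x1^2*y1^2*x2^2*y3^4*R^6) * h2 + ((-32)*y2^2*y3^2*R^6 + (-16)*y2^4*R^6 + (48)*y2^4*y3^2*R^6 + (-32)*y1^2*y3^2*R^6 + (32)*y1^2*y2^2*R^6 + (96)*y1^2*y2^2*y3^2*R^6 + (96)*y1^2*y2^2*x3^2*R^6 + (-96)*y1^2*y2^4*y3^2*R^6 + (-96)*y1^2*y2^4*x3^2*R^6 + (-192)*y1^2*x2*y2*x3*y3*R^6 + (192)*y1^2*x2*y2^3*x3*y3*R^6 + (96)*y1^2*x2^2*y3^2*R^6 + (-96)*y1^2*x2^2*y2^2*y3^2*R^6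 + (-16)*y1^4*R^6 + (48)*y1^4*y3^2*R^6 + (-96)*y1^4*y2^2*y3^2*R^6 + (-96)*y1^4*y2^2*x3^2*R^6 + (64)*y1^4*y2^4*y3^2*R^6 + (96)*y1^4*y2^4*x3^2*R^6 + (192)*y1^4*x2*y2*x3*y3*R^6 + (-192)*y1^4*x2*y2^3*x3*y3*R^6 + (-96)*y1^4*x2^2*y3^2*R^6 + (16)*y1^4*x2^2*x3^2*R^6 + (96)*y1^4*x2^2*y2^2*y3^2*R^6 + (-16)*y1^4*x2^2*y2^2*x3^2*R^6 + (192)*x1*y1*y2^2*x3*y3*R^6 + (-192)*x1*y1*y2^4*x3*y3*R^6 + (-128)*x1*y1*x2*y2*y3^2*R^6 + (128)*x1*y1*x2*y2^3*y3^2*R^6 + (-64)*x1*y1*x2*y2^3*x3^2*R^6 + (-192)*x1*y1^3*y2^2*x3*y3*R^6 + (192)*x1*y1^3*y2^4*x3*y3*R^6 + (128)*x1*y1^3*x2*y2*y3^2*R^6 + (-64)*x1*y1^3*x2*y2*x3^2*R^6 + (-128)*x1*y1^3*x2*y2^3*y3^2*R^6 + (128)*x1*y1^3*x2*y2^3*x3^2*R^6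 + (64)*x1*y1^3*x2^2*x3*y3*R^6 + (-64)*x1*y1^3*x2^2*y2^2*x3*y3*R^6 + (96)*x1^2*y2^2*y3^2*R^6 + (-96)*x1^2*y2^4*y3^2*R^6 + (16)*x1^2*y2^4*x3^2*R^6 + (-64)*x1^2*x2*y2^3*x3*y3*R^6 + (-96)*x1^2*y1^2*y2^2*y3^2*R^6 + (96)*x1^2*y1^2*y2^4*y3^2*R^6 + (-16)*x1^2*y1^2*y2^4*x3^2*R^6 + (64)*x1^2*y1^2*x2*y2^3*x3*y3*R^6) * h3

set_option maxHeartbeats 2000000 in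
theorem pentagon_diagonal_AD_quadrilateral (m n p q u v s1 s2 s3 d R : ℚ)
    (hq : q ≠ 0) (hmn : m^2 + n^2 ≠ 0)
    (hs1 : s1 = (-(q * u * v) + p * u + p * v + q) *
      (p * u * v + q * u + q * v - p) / q^2)
    (hs2 : s2 = (u^2 + 1) * (q * v - p) * (p * v + q) / q^2)
    (hs3 : s3 = m * n * (u^2 + 1) * (v^2 + 1) * (p^2 + q^2) /
      (q^2 * (m^2 + n^2)))
    (hd : d = (p^2 + q^2) * (v^2 + 1) * (m * u - n) * (n * u + m) /
      ((m^2 + n^2) * q^2))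
    (hR : R = (u^2 + 1) * (v^2 + 1) * (p^2 + q^2) / (4 * q^2)) :
    (s1 * s2 + s3 * d) * (s1 * s3 + s2 * d) * (s1 * d + s2 * s3) =
      16 * R^2 * ((-s1 + s2 + s3 + d) * (s1 - s2 + s3 + d) *
        (s1 + s2 - s3 + d) * (s1 + s2 + s3 - d)) / 16 := by
  have hu : (u^2 + 1 : ℚ) ≠ 0 := by positivity
  have hv : (v^2 + 1 : ℚ) ≠ 0 := by positivity
  have hpq : (p^2 + q^2 : ℚ) ≠ 0 := by positivity
  set D1 : ℚ := (u^2+1)*(v^2+1)*(p^2+q^2) with hD1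
  set D2 : ℚ := (v^2+1)*(p^2+q^2) with hD2
  have hD1ne : D1 ≠ 0 := by positivity
  have hD2ne : D2 ≠ 0 := by positivity
  set A1 : ℚ := (1-u^2)*(1-v^2) - (2*u)*(2*v) with hA1
  set B1 : ℚ := (1-u^2)*(2*v) + (2*u)*(1-v^2) with hB1
  refine key_quad ((A1*(q^2-p^2) + 2*p*q*B1)/D1) ((-(2*p*q)*A1 + B1*(q^2-p^2))/D1)
    (((1-v^2)*(q^2-p^2) + 2*p*q*(2*v))/D2) ((-(2*p*q)*(1-v^2) + (q^2-p^2)*(2*v))/D2)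
    ((n^2-m^2)/(m^2+n^2)) ((2*m*n)/(m^2+n^2)) R s1 s2 s3 d ?_ ?_ ?_ ?_ ?_ ?_ ?_
  · rw [hA1, hB1, hD1]; field_simp; ring
  · rw [hD2]; field_simp; ring
  · field_simp; ring
  · rw [hs1, hR, hA1, hB1, hD1]; field_simp; ring
  · rw [hs2, hR, hD2]; field_simp; ring
  · rw [hs3, hR]; field_simp; ring
  · rw [hd, hR, hA1, hB1, hD1, hD2]; field_simp; ring
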